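/- Let k be a positive integer and let G be a simple graph of order n such that d(x) + d(y) ≥ n − k + 1 for every pair of nonadjacent vertices x, y, and such that every path in G has at most n − k + 1 vertices. Then every connected component of G on at least 3 vertices contains a Hamilton cycle of that component. -/

import Mathlib

open SimpleGraph

/-- The degree of a vertex: the cardinality of its neighborhood. -/
noncomputable def deg {V : Type*} (G : SimpleGraph V) (x : V) : ℕ :=
  (G.neighborSet x).ncard

/-- The number of leaves (vertices of degree 1) of a subgraph. -/
noncomputable def leafCount {V : Type*} {G : SimpleGraph V} (H : G.Subgraph) : ℕ :=
  {v : H.verts | (H.coe.neighborSet v).ncard = 1}.ncard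

/-- `H` is a tree with at most `k` leaves (a `k`-ended tree). -/
def IsEndedTree {V : Type*} {G : SimpleGraph V} (H : G.Subgraph) (k : ℕ) : Prop :=
  H.coe.IsTree ∧ leafCount H ≤ k

/-- `t_k`: the maximum order of a subgraph of `G` that is a tree with at most `k` leaves. -/
noncomputable def treeOrd {V : Type*} (G : SimpleGraph V) (k : ℕ) : ℕ :=
  sSup {m | ∃ H : G.Subgraph, IsEndedTree H k ∧ H.verts.ncard = m}

/-- The number of vertices of a longest path in `G`. -/
noncomputable def pathOrd {V : Type*} (G : SimpleGraph V) : ℕ :=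
  sSup {m | ∃ (u v : V) (p : G.Walk u v), p.IsPath ∧ p.support.length = m}

/-- `s` is an independent set of vertices of `G`. -/
def IsIndep {V : Type*} (G : SimpleGraph V) (s : Set V) : Prop :=
  s.Pairwise fun a b => ¬ G.Adj a b

/-- `σ₃`: the minimum degree sum over independent triples of vertices. -/
noncomputable def sigma3 {V : Type*} (G : SimpleGraph V) : ℕ :=
  sInf {s | ∃ x y z : V, x ≠ y ∧ x ≠ z ∧ y ≠ z ∧
    ¬G.Adj x y ∧ ¬G.Adj x z ∧ ¬G.Adj y z ∧ s = deg G x + deg G y + deg G z}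

namespace HamAux
open SimpleGraph.Walk

variable {W : Type*} {H : SimpleGraph W}

/-- getVert is injective on a path. -/
lemma getVert_inj {u v : W} {p : H.Walk u v} (hp : p.IsPath) :
    ∀ i, i ≤ p.length → ∀ j, j ≤ p.length → p.getVert i = p.getVert j → i = j := by
  induction p with
  | nil => simp
  | @cons a b c h q ih =>
    rw [Walk.cons_isPath_iff] at hp
    intro i hi j hj hij
    match i, j with
    | 0, 0 => rfl
    | 0, j+1 =>
      exfalso
      apply hp.2
      rw [Walk.getVert_zero, Walk.getVert_cons_succ] at hij
      exact Walk.mem_support_iff_exists_getVert.mpr ⟨j, hij.symm, by simpa using hj⟩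
    | i+1, 0 =>
      exfalso
      apply hp.2
      rw [Walk.getVert_zero, Walk.getVert_cons_succ] at hij
      exact Walk.mem_support_iff_exists_getVert.mpr ⟨i, hij, by simpa using hi⟩
    | i+1, j+1 =>
      rw [Walk.getVert_cons_succ, Walk.getVert_cons_succ] at hij
      have := ih hp.1 i (by simpa using hi) j (by simpa using hj) hij
      omega

/-- A path from a vertex to itself is nil. -/
lemma loop_nil {a : W} {q : H.Walk a a} (hq : q.IsPath) : q.Nil := by
  by_contra hn
  have h2 : a ∈ q.support.tail := by
    rw [← Walk.support_tail_of_not_nil q hn]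
    exact q.tail.end_mem_support
  have h3 := hq.support_nodup
  rw [Walk.support_eq_cons] at h3
  exact (List.nodup_cons.mp h3).1 h2

/-- The edge joining the two endpoints of a long path is not an edge of the path. -/
lemma end_edge_not_mem {u v : W} {p : H.Walk u v} (hp : p.IsPath) (hl : 2 ≤ p.length) :
    s(u, v) ∉ p.edges := by
  cases p with
  | nil => simp
  | @cons a b c h q =>
    rw [Walk.cons_isPath_iff] at hp
    simp only [Walk.edges_cons, List.mem_cons]
    rintro (he | he)
    · rw [Sym2.eq_iff] at he
      rcases he with ⟨-, rfl⟩ | ⟨rfl, rfl⟩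
      · have := loop_nil hp.1
        rw [Walk.nil_iff_length_eq] at this
        simp [Walk.length_cons, this] at hl
      · exact h.ne rfl
    · exact hp.2 (Walk.fst_mem_support_of_mem_edges q he)

lemma cross_aux {L : List W} : ∀ {a b : W} (R : H.Walk a b), a ∉ L → b ∈ L →
    ∃ x y, H.Adj x y ∧ x ∉ L ∧ y ∈ L
  | _, _, Walk.nil, ha, hb => absurd hb ha
  | _, _, @Walk.cons _ _ _ v _ h q, ha, hb => by
    by_cases hv : v ∈ L
    · exact ⟨_, _, h, ha, hv⟩
    · exact cross_aux q hv hb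

lemma key_hamiltonian {W : Type*} [Fintype W] [DecidableEq W] (H : SimpleGraph W)
    (hconn : H.Connected) (hcard : 3 ≤ Fintype.card W) (b : ℕ)
    (hb : ∀ (u v : W) (p : H.Walk u v), p.IsPath → p.support.length ≤ b)
    (hdeg : ∀ x y : W, x ≠ y → ¬H.Adj x y →
      b ≤ (H.neighborSet x).ncard + (H.neighborSet y).ncard) :
    ∃ (v : W) (p : H.Walk v v), p.IsHamiltonianCycle := by
  classical
  -- a longest path
  obtain ⟨u, v, P, hP, hmax⟩ : ∃ (u v : W) (P : H.Walk u v), P.IsPath ∧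
      ∀ (x y : W) (q : H.Walk x y), q.IsPath → q.support.length ≤ P.support.length := by
    have hW : Nonempty W := Fintype.card_pos_iff.mp (by omega)
    obtain ⟨w0⟩ := hW
    set S : Set ℕ := {m | ∃ (x y : W) (q : H.Walk x y), q.IsPath ∧ q.support.length = m} with hS
    have hne : S.Nonempty := ⟨1, w0, w0, Walk.nil, Walk.IsPath.nil, rfl⟩
    have hbdd : BddAbove S := by
      refine ⟨Fintype.card W, ?_⟩
      rintro m ⟨x, y, q, hq, rfl⟩
      exact hq.support_nodup.length_le_card
    obtain ⟨x, y, q, hq, hqlen⟩ := Nat.sSup_mem hne hbdd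
    exact ⟨x, y, q, hq, fun a bb r hr => hqlen ▸ le_csSup hbdd ⟨a, bb, r, hr, rfl⟩⟩
  -- longest path has length ≥ 2
  have hL2 : 2 ≤ P.length := by
    by_contra hcon
    push_neg at hcon
    have hlen2 : ∀ (x y : W) (q : H.Walk x y), q.IsPath → q.length ≤ 1 := by
      intro x y q hq
      have := hmax x y q hq
      rw [Walk.length_support, Walk.length_support] at this
      omega
    have hadj : ∀ a c : W, a ≠ c → H.Adj a c := by
      intro a c hac
      obtain ⟨q0⟩ := hconn.preconnected a c
      have hq := q0.toPath.2
      have h1 : (q0.toPath : H.Walk a c).length = 1 := by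
        have := hlen2 _ _ _ hq
        have hnn : ¬(q0.toPath : H.Walk a c).Nil := Walk.not_nil_of_ne hac
        rw [Walk.not_nil_iff_lt_length] at hnn
        omega
      have : H.Adj a ((q0.toPath : H.Walk a c).getVert 1) :=
        (q0.toPath : H.Walk a c).adj_snd (Walk.not_nil_of_ne hac)
      rwa [show (1 : ℕ) = (q0.toPath : H.Walk a c).length from h1.symm,
        Walk.getVert_length] at this
    obtain ⟨x, y, hxy⟩ := Fintype.exists_pair_of_one_lt_card (α := W) (by omega)
    obtain ⟨z, hzx, hzy⟩ : ∃ z : W, z ≠ x ∧ z ≠ y := by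
      by_contra hcon2
      push_neg at hcon2
      have : (Finset.univ : Finset W) ⊆ {x, y} := by
        intro z _
        by_cases h : z = x
        · simp [h]
        · simp [hcon2 z h]
      have := Finset.card_le_card this
      have h2 : ({x, y} : Finset W).card ≤ 2 := (Finset.card_insert_le _ _).trans (by norm_num)
      rw [Finset.card_univ] at this
      omega
    have hq : (Walk.cons (hadj z x hzx) (Walk.cons (hadj x y hxy) Walk.nil)).IsPath := by
      simp [Walk.cons_isPath_iff, hzx, hzy, hxy]
    have := hlen2 _ _ _ hq
    simp at this
  -- endpoints distinct
  have huv : u ≠ v := by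
    rintro rfl
    have := loop_nil hP
    rw [Walk.nil_iff_length_eq] at this
    omega
  -- neighbors of endpoints lie on the path
  have hNu : ∀ w, H.Adj u w → w ∈ P.support := by
    intro w hw
    by_contra hws
    have hcons : (Walk.cons hw.symm P).IsPath := hP.cons hws
    have := hmax _ _ _ hcons
    rw [Walk.support_cons] at this
    simp at this
  have hNv : ∀ w, H.Adj v w → w ∈ P.support := by
    intro w hw
    by_contra hws
    have hws' : w ∉ P.reverse.support := by rwa [Walk.support_reverse, List.mem_reverse]
    have hcons : (Walk.cons hw.symm P.reverse).IsPath := hP.reverse.cons hws'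
    have := hmax _ _ _ hcons
    rw [Walk.support_cons] at this
    simp [Walk.support_reverse] at this
  -- main construction
  suffices hC : ∃ C : H.Walk u u, C.IsCycle ∧ (∀ w, w ∈ C.support ↔ w ∈ P.support) ∧
      C.support.length = P.support.length + 1 by
    obtain ⟨C, hCcyc, hCmem, hClen⟩ := hC
    have hCnodup : C.support.tail.Nodup := hCcyc.support_nodup
    have hspan : ∀ z, z ∈ P.support := by
      by_contra hcon
      push_neg at hcon
      obtain ⟨z, hz⟩ := hcon
      obtain ⟨R⟩ := hconn.preconnected z u
      obtain ⟨z', y, hzy, hz', hy⟩ := cross_aux R hz P.start_mem_support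
      have hyC : y ∈ C.support := (hCmem y).mpr hy
      have hC'cyc : (C.rotate y hyC).IsCycle := hCcyc.rotate hyC
      have hC'nil : ¬(C.rotate y hyC).Nil := hC'cyc.not_nil
      have htailsup : (C.rotate y hyC).tail.support = (C.rotate y hyC).support.tail :=
        Walk.support_tail_of_not_nil _ hC'nil
      have hrot := Walk.support_rotate C y hyC
      have hPz : (Walk.cons hzy (C.rotate y hyC).tail.reverse).IsPath := by
        rw [Walk.isPath_def, Walk.support_cons, List.nodup_cons]
        constructor
        · rw [Walk.support_reverse, List.mem_reverse, htailsup]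
          intro hmem
          exact hz' ((hCmem z').mp (List.mem_of_mem_tail (hrot.mem_iff.mp hmem)))
        · rw [Walk.support_reverse, List.nodup_reverse, htailsup]
          exact hC'cyc.support_nodup
      have hlen := hmax _ _ _ hPz
      have e1 : C.support.length = C.support.tail.length + 1 := by
        conv_lhs => rw [Walk.support_eq_cons C]
        simp
      have e2 : (C.rotate y hyC).support.length = (C.rotate y hyC).support.tail.length + 1 := by
        conv_lhs => rw [Walk.support_eq_cons]
        simp
      have e3 : (C.rotate y hyC).support.tail.length = C.support.tail.length := hrot.perm.length_eq
      rw [Walk.support_cons, List.length_cons, Walk.support_reverse, List.length_reverse,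
        htailsup] at hlen
      omega
    refine ⟨u, C,
      Walk.isHamiltonianCycle_iff_isCycle_and_support_count_tail_eq_one.mpr
        ⟨hCcyc, fun a => ?_⟩⟩
    have hmem : a ∈ C.support.tail := by
      rcases eq_or_ne a u with rfl | ha
      · rw [← Walk.support_tail_of_not_nil _ hCcyc.not_nil]
        exact C.tail.end_mem_support
      · have h1 : a ∈ C.support := (hCmem a).mpr (hspan a)
        rw [Walk.support_eq_cons] at h1
        rcases List.mem_cons.mp h1 with h | h
        · exact absurd h ha
        · exact h
    exact List.count_eq_one_of_mem hCnodup hmem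
  by_cases hadj_uv : H.Adj u v
  · -- adjacent case
    have hedge : s(v, u) ∉ P.edges := by
      rw [Sym2.eq_swap]
      exact end_edge_not_mem hP hL2
    have hsupp : (P.append (Walk.cons hadj_uv.symm Walk.nil)).support = P.support ++ [u] := by
      rw [Walk.support_append, Walk.support_cons, Walk.support_nil, List.tail_cons]
    have hPn := hP.support_nodup
    rw [Walk.support_eq_cons P, List.nodup_cons] at hPn
    refine ⟨P.append (Walk.cons hadj_uv.symm Walk.nil), ?_, ?_, ?_⟩
    · rw [Walk.isCycle_def]
      refine ⟨⟨?_⟩, ?_, ?_⟩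
      · rw [Walk.edges_append, Walk.edges_cons, Walk.edges_nil, List.nodup_append]
        exact ⟨hP.isTrail.edges_nodup, List.nodup_singleton _, by
            intro a ha b hb; rw [List.mem_singleton] at hb; subst hb; exact fun h => hedge (h ▸ ha)⟩
      · intro hnil
        have := congrArg Walk.length hnil
        rw [Walk.length_append, Walk.length_cons, Walk.length_nil] at this
        omega
      · rw [hsupp, Walk.support_eq_cons P, List.cons_append, List.tail_cons, List.nodup_append]
        refine ⟨hPn.2, List.nodup_singleton _, ?_⟩
        intro a ha b hmem
        rw [List.mem_singleton] at hmem
        subst hmem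
        exact fun h => hPn.1 (h ▸ ha)
    · intro w
      rw [hsupp, List.mem_append, List.mem_singleton]
      constructor
      · rintro (h | rfl)
        · exact h
        · exact P.start_mem_support
      · exact fun h => Or.inl h
    · rw [hsupp, List.length_append, List.length_singleton]
  · -- nonadjacent case
    have hbound : P.length + 1 ≤ b := by
      have := hb _ _ P hP
      rw [Walk.length_support] at this
      omega
    have hdsum := hdeg u v huv hadj_uv
    classical
    set S := (Finset.range P.length).filter (fun i => H.Adj u (P.getVert (i+1))) with hSdef
    set T := (Finset.range P.length).filter (fun i => H.Adj v (P.getVert i)) with hTdef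
    have hScard : (H.neighborSet u).ncard = S.card := by
      have himg : H.neighborSet u = ↑(S.image fun i => P.getVert (i+1)) := by
        ext w
        simp only [mem_neighborSet, Finset.coe_image, Set.mem_image, Finset.mem_coe,
          hSdef, Finset.mem_filter, Finset.mem_range]
        constructor
        · intro hw
          obtain ⟨j, hj1, hj2⟩ := Walk.mem_support_iff_exists_getVert.mp (hNu w hw)
          match j with
          | 0 =>
            rw [Walk.getVert_zero] at hj1
            exact absurd hj1 hw.ne
          | Nat.succ i =>
            exact ⟨i, ⟨by omega, by rwa [hj1]⟩, hj1⟩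
        · rintro ⟨i, ⟨hi, hadj⟩, rfl⟩
          exact hadj
      rw [himg, Set.ncard_coe_finset]
      apply Finset.card_image_of_injOn
      intro i hi j hj hij
      have hi' : i < P.length := by
        have h2 := Finset.mem_coe.mp hi
        rw [hSdef, Finset.mem_filter, Finset.mem_range] at h2
        exact h2.1
      have hj' : j < P.length := by
        have h2 := Finset.mem_coe.mp hj
        rw [hSdef, Finset.mem_filter, Finset.mem_range] at h2
        exact h2.1
      have := getVert_inj hP (i+1) (by omega) (j+1) (by omega) hij
      omega
    have hTcard : (H.neighborSet v).ncard = T.card := by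
      have himg : H.neighborSet v = ↑(T.image fun i => P.getVert i) := by
        ext w
        simp only [mem_neighborSet, Finset.coe_image, Set.mem_image, Finset.mem_coe,
          hTdef, Finset.mem_filter, Finset.mem_range]
        constructor
        · intro hw
          obtain ⟨j, hj1, hj2⟩ := Walk.mem_support_iff_exists_getVert.mp (hNv w hw)
          have hjne : j ≠ P.length := by
            rintro rfl
            rw [Walk.getVert_length] at hj1
            exact hw.ne hj1
          exact ⟨j, ⟨by omega, by rwa [hj1]⟩, hj1⟩
        · rintro ⟨i, ⟨hi, hadj⟩, rfl⟩
          exact hadj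
      rw [himg, Set.ncard_coe_finset]
      apply Finset.card_image_of_injOn
      intro i hi j hj hij
      have hi' : i < P.length := by
        have h2 := Finset.mem_coe.mp hi
        rw [hTdef, Finset.mem_filter, Finset.mem_range] at h2
        exact h2.1
      have hj' : j < P.length := by
        have h2 := Finset.mem_coe.mp hj
        rw [hTdef, Finset.mem_filter, Finset.mem_range] at h2
        exact h2.1
      have := getVert_inj hP i (by omega) j (by omega) hij
      omega
    have hint : (S ∩ T).Nonempty := by
      have h1 := Finset.card_union_add_card_inter S T
      have hsub : S ∪ T ⊆ Finset.range P.length := by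
        apply Finset.union_subset <;> exact Finset.filter_subset _ _
      have h2 : (S ∪ T).card ≤ P.length := by
        have := Finset.card_le_card hsub
        simpa using this
      rw [← Finset.card_pos]
      omega
    obtain ⟨i, hiST⟩ := hint
    rw [Finset.mem_inter, hSdef, hTdef, Finset.mem_filter, Finset.mem_filter,
      Finset.mem_range] at hiST
    obtain ⟨⟨hilt, hu_i1⟩, -, hv_i⟩ := hiST
    have hi1 : 1 ≤ i := by
      rcases Nat.eq_zero_or_pos i with rfl | h
      · rw [Walk.getVert_zero] at hv_i
        exact absurd hv_i.symm hadj_uv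
      · exact h
    have hi2 : i + 1 < P.length := by
      rcases Nat.lt_or_ge (i+1) P.length with h | h
      · exact h
      · have : i + 1 = P.length := by omega
        rw [this, Walk.getVert_length] at hu_i1
        exact absurd hu_i1 hadj_uv
    -- split the path
    have hx_supp : P.getVert i ∈ P.support :=
      Walk.mem_support_iff_exists_getVert.mpr ⟨i, rfl, by omega⟩
    set Q := P.takeUntil _ hx_supp with hQdef
    set D := P.dropUntil _ hx_supp with hDdef
    have hQD : Q.append D = P := P.take_spec hx_supp
    have hQ : Q.IsPath := hP.takeUntil hx_supp
    have hD : D.IsPath := hP.dropUntil hx_supp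
    have hQlen : Q.length = i := by
      have hle := P.length_takeUntil_le hx_supp
      have hgv : (Q.append D).getVert Q.length = P.getVert i := by
        rw [Walk.getVert_append]
        simp
      rw [hQD] at hgv
      exact getVert_inj hP Q.length hle i (by omega) hgv
    have hlenP : P.length = Q.length + D.length := by
      have := Walk.length_append Q D
      rw [hQD] at this
      omega
    have hDnil : ¬D.Nil := by
      rw [Walk.not_nil_iff_lt_length]
      omega
    have hadjD : H.Adj (P.getVert i) (D.getVert 1) := D.adj_snd hDnil
    have hDE : Walk.cons hadjD D.tail = D := D.cons_tail_eq hDnil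
    have hy_eq : D.getVert 1 = P.getVert (i+1) := by
      conv_rhs => rw [← hQD]
      rw [Walk.getVert_append, hQlen]
      have h1 : ¬(i + 1 < i) := by omega
      have h2 : i + 1 - i = 1 := by omega
      rw [if_neg h1, h2]
    have hE : D.tail.IsPath := by
      rw [← hDE, Walk.cons_isPath_iff] at hD
      exact hD.1
    have hxE : P.getVert i ∉ D.tail.support := by
      rw [← hDE, Walk.cons_isPath_iff] at hD
      exact hD.2
    have h_xv : H.Adj (P.getVert i) v := hv_i.symm
    have h_yu : H.Adj (D.getVert 1) u := by
      rw [hy_eq]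
      exact hu_i1.symm
    -- the cycle
    set C : H.Walk u u :=
      Q.append (Walk.cons h_xv (D.tail.reverse.append (Walk.cons h_yu Walk.nil))) with hCdef
    have hDsupp : D.support = P.getVert i :: D.tail.support := by
      conv_lhs => rw [← hDE]
      rw [Walk.support_cons]
    have hPsupp : P.support = Q.support ++ D.tail.support := by
      conv_lhs => rw [← hQD]
      rw [Walk.support_append, hDsupp, List.tail_cons]
    have hCsupp : C.support = Q.support ++ (D.tail.reverse.support ++ [u]) := by
      rw [hCdef, Walk.support_append, Walk.support_cons, List.tail_cons, Walk.support_append,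
        Walk.support_cons, Walk.support_nil, List.tail_cons]
    have hPn := hP.support_nodup
    rw [hPsupp, List.nodup_append] at hPn
    obtain ⟨hQn, hEn, hdisjQE⟩ := hPn
    have huQ : u ∈ Q.support := Q.start_mem_support
    have hxQ : P.getVert i ∈ Q.support := Q.end_mem_support
    have hyE : D.getVert 1 ∈ D.tail.support := D.tail.start_mem_support
    have hvE : v ∈ D.tail.support := D.tail.end_mem_support
    have huE : u ∉ D.tail.support := fun h => hdisjQE _ huQ _ h rfl
    have hvQ : v ∉ Q.support := fun h => hdisjQE _ h _ hvE rfl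
    have hyQ : D.getVert 1 ∉ Q.support := fun h => hdisjQE _ h _ hyE rfl
    have hxu : P.getVert i ≠ u := by
      intro h
      have : P.getVert i = P.getVert 0 := by rw [h, Walk.getVert_zero]
      have := getVert_inj hP i (by omega) 0 (by omega) this
      omega
    -- edges
    have hPedges : P.edges = Q.edges ++ (s(P.getVert i, D.getVert 1) :: D.tail.edges) := by
      conv_lhs => rw [← hQD]
      rw [Walk.edges_append]
      congr 1
      conv_lhs => rw [← hDE]
      rw [Walk.edges_cons]
    have hPe := hP.isTrail.edges_nodup
    rw [hPedges, List.nodup_append] at hPe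
    obtain ⟨hQe, hDe', hdisjE⟩ := hPe
    rw [List.nodup_cons] at hDe'
    obtain ⟨hxyE, hEe⟩ := hDe'
    have hCedges : C.edges =
        Q.edges ++ (s(P.getVert i, v) :: (D.tail.reverse.edges ++ [s(D.getVert 1, u)])) := by
      rw [hCdef, Walk.edges_append, Walk.edges_cons, Walk.edges_append, Walk.edges_cons,
        Walk.edges_nil]
    refine ⟨C, ?_, ?_, ?_⟩
    · rw [Walk.isCycle_def]
      refine ⟨⟨?_⟩, ?_, ?_⟩
      · rw [hCedges, List.nodup_append]
        refine ⟨hQe, ?_, ?_⟩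
        · rw [List.nodup_cons]
          constructor
          · rw [List.mem_append, List.mem_singleton]
            rintro (h | h)
            · rw [Walk.edges_reverse, List.mem_reverse] at h
              exact hxE (Walk.fst_mem_support_of_mem_edges _ h)
            · rw [Sym2.eq_iff] at h
              rcases h with ⟨-, h2⟩ | ⟨h1, -⟩
              · exact huv h2.symm
              · exact hxu h1
          · rw [List.nodup_append]
            refine ⟨?_, List.nodup_singleton _, ?_⟩
            · rw [Walk.edges_reverse, List.nodup_reverse]
              exact hEe
            · intro e he e' hmem
              rw [List.mem_singleton] at hmem
              subst hmem
              rintro rfl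
              rw [Walk.edges_reverse, List.mem_reverse] at he
              exact huE (Walk.snd_mem_support_of_mem_edges _ he)
        · intro e he e' hmem
          rw [List.mem_cons, List.mem_append, List.mem_singleton] at hmem
          rcases hmem with rfl | h | rfl
          · rintro rfl
            exact hvQ (Walk.snd_mem_support_of_mem_edges _ he)
          · rw [Walk.edges_reverse, List.mem_reverse] at h
            exact hdisjE _ he _ (List.mem_cons_of_mem _ h)
          · rintro rfl
            exact hyQ (Walk.fst_mem_support_of_mem_edges _ he)
      · intro hnil
        have := congrArg Walk.length hnil
        rw [hCdef, Walk.length_append, Walk.length_cons, Walk.length_nil] at this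
        omega
      · rw [hCsupp, Walk.support_eq_cons Q, List.cons_append, List.tail_cons, List.nodup_append]
        have hQn' := hQn
        rw [Walk.support_eq_cons Q, List.nodup_cons] at hQn'
        refine ⟨hQn'.2, ?_, ?_⟩
        · rw [List.nodup_append]
          refine ⟨?_, List.nodup_singleton _, ?_⟩
          · rw [Walk.support_reverse, List.nodup_reverse]
            exact hEn
          · intro a ha b hmem
            rw [List.mem_singleton] at hmem
            subst hmem
            rw [Walk.support_reverse, List.mem_reverse] at ha
            rintro rfl
            exact huE ha
        · intro a ha b hmem
          rw [List.mem_append, List.mem_singleton] at hmem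
          have haQ : a ∈ Q.support := List.mem_of_mem_tail ha
          rcases hmem with h | rfl
          · rw [Walk.support_reverse, List.mem_reverse] at h
            exact hdisjQE _ haQ _ h
          · exact fun h => hQn'.1 (h ▸ ha)
    · intro w
      simp only [hCsupp, hPsupp, List.mem_append, List.mem_singleton,
        Walk.support_reverse, List.mem_reverse]
      constructor
      · rintro (h | h | rfl)
        · exact Or.inl h
        · exact Or.inr h
        · exact Or.inl huQ
      · rintro (h | h)
        · exact Or.inl h
        · exact Or.inr (Or.inl h)
    · rw [hCsupp, hPsupp]
      simp only [List.length_append, List.length_singleton, Walk.support_reverse,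
        List.length_reverse]
      omega

end HamAux

/-- If `k ≥ 1`, `d(x) + d(y) ≥ n - k + 1` for every pair of nonadjacent
vertices, and every path of `G` has at most `n - k + 1` vertices, then every connected
component of `G` on at least 3 vertices has a Hamilton cycle. -/
theorem component_hamiltonian {V : Type*} [Fintype V] [DecidableEq V] (k : ℕ) (hk : 1 ≤ k)
    (G : SimpleGraph V)
    (hdeg : ∀ x y : V, x ≠ y → ¬ G.Adj x y →
      (Fintype.card V : ℤ) - k + 1 ≤ (deg G x : ℤ) + deg G y)
    (hpath : ∀ (u v : V) (p : G.Walk u v), p.IsPath →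
      (p.support.length : ℤ) ≤ (Fintype.card V : ℤ) - k + 1) :
    ∀ c : G.ConnectedComponent, 3 ≤ c.supp.ncard →
      ∃ (v : c.supp) (p : (G.induce c.supp).Walk v v), p.IsHamiltonianCycle := by
  intro c hc
  classical
  haveI : Fintype (c.supp : Set V) := Fintype.ofFinite _
  have hcard : 3 ≤ Fintype.card c.supp := by
    rw [← Nat.card_eq_fintype_card, Nat.card_coe_set_eq]
    exact hc
  obtain ⟨v0, hv0⟩ : ∃ v0, v0 ∈ c.supp := Set.nonempty_of_ncard_ne_zero (by omega)
  have hkn : k ≤ Fintype.card V := by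
    have h1 := hpath v0 v0 Walk.nil Walk.IsPath.nil
    simp only [Walk.support_nil, List.length_singleton] at h1
    omega
  set n := Fintype.card V with hn
  set b := n + 1 - k with hbdef
  have hsupp_adj : ∀ (x : V), x ∈ c.supp → ∀ w, G.Adj x w → w ∈ c.supp := by
    intro x hx w hxw
    rw [SimpleGraph.ConnectedComponent.mem_supp_iff] at hx ⊢
    rw [← hx]
    exact SimpleGraph.ConnectedComponent.sound hxw.symm.reachable
  have hdegeq : ∀ x : c.supp, ((G.induce c.supp).neighborSet x).ncard = deg G (x : V) := by
    intro x
    have himg : Subtype.val '' ((G.induce c.supp).neighborSet x) = G.neighborSet (x : V) := by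
      ext w
      constructor
      · rintro ⟨⟨w', hw'⟩, ha, rfl⟩
        exact ha
      · intro ha
        exact ⟨⟨w, hsupp_adj _ x.2 w ha⟩, ha, rfl⟩
    rw [deg, ← himg, Set.ncard_image_of_injective _ Subtype.val_injective]
  have hconn : (G.induce c.supp).Connected := by
    apply SimpleGraph.induce_connected_of_patches v0 hv0
    intro v hv
    have hreach : G.Reachable v0 v := by
      rw [SimpleGraph.ConnectedComponent.mem_supp_iff] at hv
      have hv0' := (SimpleGraph.ConnectedComponent.mem_supp_iff c v0).mp hv0
      exact (SimpleGraph.ConnectedComponent.eq).mp (hv0'.trans hv.symm)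
    obtain ⟨p⟩ := hreach
    refine ⟨{w | w ∈ p.support}, ?_, p.start_mem_support, p.end_mem_support, ?_⟩
    · intro w hw
      rw [Set.mem_setOf_eq] at hw
      rw [SimpleGraph.ConnectedComponent.mem_supp_iff]
      have hr : G.Reachable v0 w := ⟨p.takeUntil w hw⟩
      have hv0' := (SimpleGraph.ConnectedComponent.mem_supp_iff c v0).mp hv0
      rw [← hv0']
      exact (SimpleGraph.ConnectedComponent.sound hr).symm
    · exact (p.connected_induce_support).preconnected _ _
  have hble : ∀ (x y : ↑c.supp) (p : (G.induce c.supp).Walk x y), p.IsPath →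
      p.support.length ≤ b := by
    intro x y p hp
    have hp' : (p.map (SimpleGraph.Embedding.induce (G := G) c.supp).toHom).IsPath :=
      Walk.map_isPath_of_injective (SimpleGraph.Embedding.induce (G := G) c.supp).injective hp
    have hlen := hpath _ _ _ hp'
    rw [Walk.support_map, List.length_map] at hlen
    omega
  have hdegle : ∀ x y : ↑c.supp, x ≠ y → ¬(G.induce c.supp).Adj x y →
      b ≤ ((G.induce c.supp).neighborSet x).ncard + ((G.induce c.supp).neighborSet y).ncard := by
    intro x y hxy hnadj
    have hne : (x : V) ≠ y := fun h => hxy (Subtype.ext h)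
    have hnadj' : ¬G.Adj x y := fun h => hnadj h
    have h2 := hdeg x y hne hnadj'
    rw [hdegeq x, hdegeq y]
    omega
  obtain ⟨v, p, hp⟩ := HamAux.key_hamiltonian (G.induce c.supp) hconn hcard b hble hdegle
  exact ⟨v, p, hp⟩
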